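/- Assume condition (∗). If the sequence of cardinalities ⟨|X_i| : i ∈ I⟩ is finite-to-one, i.e. there is no infinite J ⊆ I such that |X_i| = |X_j| for all i, j ∈ J, then ⋃_{i∈I} X_i is a reversible structure. -/
import Mathlib


universe u v w

section Defs

variable {α : Type*} {β : Type*}

/-- `f` is a homomorphism from `⟨α, r⟩` to `⟨β, s⟩`. -/
def IsHom (r : α → α → Prop) (s : β → β → Prop) (f : α → β) : Prop :=
  ∀ x y, r x y → s (f x) (f y)

/-- A condensation is a bijective homomorphism. -/
def IsCond (r : α → α → Prop) (s : β → β → Prop) (f : α → β) : Prop :=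
  Function.Bijective f ∧ IsHom r s f

/-- A monomorphism is an injective homomorphism. -/
def IsMono (r : α → α → Prop) (s : β → β → Prop) (f : α → β) : Prop :=
  Function.Injective f ∧ IsHom r s f

/-- An isomorphism of binary structures. -/
def IsIso (r : α → α → Prop) (s : β → β → Prop) (f : α → β) : Prop :=
  Function.Bijective f ∧ ∀ x y, r x y ↔ s (f x) (f y)

/-- A binary structure is reversible iff every self-condensation is an automorphism. -/
def Reversible (r : α → α → Prop) : Prop :=
  ∀ f : α → α, IsCond r r f → IsIso r r f

/-- A binary structure is connected iff it has exactly one component: it is nonempty and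
the least equivalence relation containing `r` relates any two points. -/
def Connected (r : α → α → Prop) : Prop :=
  Nonempty α ∧ ∀ x y, Relation.EqvGen r x y

/-- The relation of the disjoint union of the structures `⟨X i, R i⟩`. -/
def unionRel {I : Type*} {X : I → Type*} (R : ∀ i, X i → X i → Prop) :
    (Σ i, X i) → (Σ i, X i) → Prop :=
  fun a b => ∃ h : a.1 = b.1, R b.1 (h ▸ a.2) b.2

end Defs


section Aux

variable {I : Type u} {X : I → Type v}

/-- Key cardinal lemma: a surjection `σ` that does not decrease a finite-to-one
cardinal weight is injective and preserves the weight. -/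
lemma aux_card (κ : I → Cardinal.{v}) (σ : I → I) (hsurj : Function.Surjective σ)
    (hle : ∀ i, κ i ≤ κ (σ i)) (hfin : ∀ c, {i | κ i = c}.Finite) :
    Function.Injective σ ∧ ∀ i, κ (σ i) = κ i := by
  have key : ∀ μ : Cardinal.{v}, ∀ i, κ i = μ →
      (κ (σ i) = μ ∧ ∀ j, σ j = σ i → j = i) := by
    intro μ
    induction μ using WellFounded.induction Cardinal.lt_wf with
    | _ μ IH =>
    have hstep : ∀ i, κ (σ i) = μ → κ i = μ := by
      intro i h
      by_contra hne
      have hlt : κ i < μ := lt_of_le_of_ne (h ▸ hle i) hne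
      have := (IH (κ i) hlt i rfl).1
      rw [h] at this
      exact hne this.symm
    set M : Set I := {i | κ i = μ} with hM
    have hMfin : M.Finite := hfin μ
    set c : I → I := Function.surjInv hsurj with hc
    have hcs : ∀ j, σ (c j) = j := fun j => Function.surjInv_eq hsurj j
    have hmaps : Set.MapsTo c M M := by
      intro j hj
      exact hstep (c j) (by rw [hcs j]; exact hj)
    have hinj : Set.InjOn c M := by
      intro a _ b _ hab
      rw [← hcs a, ← hcs b, hab]
    have hsurjOn : Set.SurjOn c M M :=
      ((hMfin.injOn_iff_bijOn_of_mapsTo hmaps).mp hinj).2.2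
    intro i hi
    obtain ⟨j, hjM, hji⟩ := hsurjOn hi
    have hσi : σ i = j := by rw [← hji, hcs]
    constructor
    · rw [hσi]; exact hjM
    · intro j' hj'
      have hj'M : κ j' = μ := hstep j' (by rw [hj', hσi]; exact hjM)
      obtain ⟨j'', hj''M, hj''⟩ := hsurjOn hj'M
      have : σ j' = j'' := by rw [← hj'', hcs]
      rw [hj', hσi] at this
      rw [← hj'', ← this]
      exact hji
  constructor
  · intro a b hab
    exact (key (κ b) b rfl).2 a hab
  · intro i
    exact (key (κ i) i rfl).1

/-- Composition of the maps `F` along `n` steps of `σ`. -/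
def compF (σ : I → I) (F : ∀ i, X i → X (σ i)) : ∀ (n : ℕ) (i : I), X i → X (σ^[n] i)
  | 0, _, x => x
  | n + 1, i, x => compF σ F n (σ i) (F i x)

lemma compF_hom (σ : I → I) (F : ∀ i, X i → X (σ i)) (R : ∀ i, X i → X i → Prop)
    (hF : ∀ i (x y : X i), R i x y → R (σ i) (F i x) (F i y)) :
    ∀ (n : ℕ) (i : I) (x y : X i), R i x y →
      R (σ^[n] i) (compF σ F n i x) (compF σ F n i y) := by
  intro n
  induction n with
  | zero => intro i x y h; exact h
  | succ n ih => intro i x y h; exact ih (σ i) (F i x) (F i y) (hF i x y h)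

lemma compF_bij (σ : I → I) (F : ∀ i, X i → X (σ i))
    (hF : ∀ i, Function.Bijective (F i)) :
    ∀ (n : ℕ) (i : I), Function.Bijective (compF σ F n i) := by
  intro n
  induction n with
  | zero => intro i; exact Function.bijective_id
  | succ n ih => intro i; exact (ih (σ i)).comp (hF i)

lemma rel_transport (R : ∀ i, X i → X i → Prop) {i j : I} (e : i = j) {a b : X i}
    (h : R i a b) : R j (cast (congrArg X e) a) (cast (congrArg X e) b) := by
  subst e; exact h

lemma cast_bij {i j : I} (e : i = j) :
    Function.Bijective (fun a : X i => cast (congrArg X e) a) := by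
  subst e; exact Function.bijective_id

lemma sigma_eq_of_fst (p : Σ i, X i) {j : I} (h : p.1 = j) :
    p = ⟨j, cast (congrArg X h) p.2⟩ := by
  obtain ⟨i, x⟩ := p
  subst h
  rfl

end Aux

lemma eqvGen_map {A : Type u} {B : Type w} {r : A → A → Prop} {s : B → B → Prop}
    {g : A → B} (hg : IsHom r s g) :
    ∀ {a b : A}, Relation.EqvGen r a b → Relation.EqvGen s (g a) (g b) := by
  intro a b h
  induction h with
  | rel a b h => exact Relation.EqvGen.rel _ _ (hg a b h)
  | refl a => exact Relation.EqvGen.refl _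
  | symm a b _ ih => exact Relation.EqvGen.symm _ _ ih
  | trans a b c _ _ ih1 ih2 => exact Relation.EqvGen.trans _ _ _ ih1 ih2

theorem stmt9 {I : Type u} {X : I → Type v} (R : ∀ i, X i → X i → Prop)
    (hconn : ∀ i, Connected (R i)) (hrev : ∀ i, Reversible (R i))
    (hfto : ¬ ∃ J : Set I, J.Infinite ∧
      ∀ i ∈ J, ∀ j ∈ J, Cardinal.mk (X i) = Cardinal.mk (X j)) :
    Reversible (unionRel R) := by
  rintro f ⟨hbij, hhom⟩
  have x0 : ∀ i, X i := fun i => Classical.choice (hconn i).1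
  -- the first component is constant on EqvGen classes
  have hfst : ∀ a b : (Σ i, X i), Relation.EqvGen (unionRel R) a b → a.1 = b.1 := by
    intro a b h
    induction h with
    | rel _ _ h => exact h.1
    | refl _ => rfl
    | symm _ _ _ ih => exact ih.symm
    | trans _ _ _ _ _ ih1 ih2 => exact ih1.trans ih2
  have hconst : ∀ i (x y : X i), (f ⟨i, x⟩).1 = (f ⟨i, y⟩).1 := by
    intro i x y
    have h1 : Relation.EqvGen (R i) x y := (hconn i).2 x y
    have hincl : IsHom (R i) (unionRel R) (fun z => (⟨i, z⟩ : Σ k, X k)) :=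
      fun a b h => ⟨rfl, h⟩
    have h2 : Relation.EqvGen (unionRel R) ⟨i, x⟩ ⟨i, y⟩ := eqvGen_map hincl h1
    exact hfst _ _ (eqvGen_map hhom h2)
  set σ : I → I := fun i => (f ⟨i, x0 i⟩).1 with hσdef
  have hkey : ∀ i (x : X i), (f ⟨i, x⟩).1 = σ i := fun i x => hconst i x (x0 i)
  set F : ∀ i, X i → X (σ i) :=
    fun i x => cast (congrArg X (hkey i x)) (f ⟨i, x⟩).2 with hFdef
  have hfF : ∀ i (x : X i), f ⟨i, x⟩ = ⟨σ i, F i x⟩ :=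
    fun i x => sigma_eq_of_fst _ (hkey i x)
  have hFinj : ∀ i, Function.Injective (F i) := by
    intro i x y h
    have h1 : f ⟨i, x⟩ = f ⟨i, y⟩ := by rw [hfF, hfF, h]
    obtain ⟨-, h3⟩ := Sigma.mk.inj_iff.mp (hbij.1 h1)
    exact eq_of_heq h3
  have hσsurj : Function.Surjective σ := by
    intro j
    obtain ⟨⟨i, x⟩, hx⟩ := hbij.2 ⟨j, x0 j⟩
    have h0 := congrArg Sigma.fst hx
    exact ⟨i, (hkey i x).symm.trans h0⟩
  have hfin : ∀ c : Cardinal.{v}, {i | Cardinal.mk (X i) = c}.Finite := by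
    intro c
    by_contra hc
    exact hfto ⟨{i | Cardinal.mk (X i) = c}, hc, fun i hi j hj => hi.trans hj.symm⟩
  obtain ⟨hσinj, hκ⟩ := aux_card (fun i => Cardinal.mk (X i)) σ hσsurj
    (fun i => Cardinal.mk_le_of_injective (hFinj i)) hfin
  have hFsurj : ∀ i, Function.Surjective (F i) := by
    intro i y
    obtain ⟨⟨i', x⟩, hx⟩ := hbij.2 ⟨σ i, y⟩
    rw [hfF] at hx
    have h1 : σ i' = σ i := by
      have h0 := congrArg Sigma.fst hx
      exact h0
    obtain rfl : i' = i := hσinj h1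
    obtain ⟨-, h2⟩ := Sigma.mk.inj_iff.mp hx
    exact ⟨x, eq_of_heq h2⟩
  have hFbij : ∀ i, Function.Bijective (F i) := fun i => ⟨hFinj i, hFsurj i⟩
  have hFhom : ∀ i (x y : X i), R i x y → R (σ i) (F i x) (F i y) := by
    intro i x y h
    have h1 : unionRel R (f ⟨i, x⟩) (f ⟨i, y⟩) := hhom _ _ ⟨rfl, h⟩
    rw [hfF, hfF] at h1
    obtain ⟨e, hr⟩ := h1
    exact hr
  -- every σ-orbit is finite
  have horb : ∀ i, ∃ q : ℕ, σ^[q + 1] i = i := by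
    intro i
    have hiter : ∀ n, Cardinal.mk (X (σ^[n] i)) = Cardinal.mk (X i) := by
      intro n
      induction n with
      | zero => rfl
      | succ n ih => rw [Function.iterate_succ_apply', hκ, ih]
    have : Finite {j | Cardinal.mk (X j) = Cardinal.mk (X i)} :=
      (hfin (Cardinal.mk (X i))).to_subtype
    obtain ⟨m, n, hmn, h⟩ := Finite.exists_ne_map_eq_of_infinite
      (fun n : ℕ => (⟨σ^[n] i, hiter n⟩ : {j | Cardinal.mk (X j) = Cardinal.mk (X i)}))
    have hval : σ^[m] i = σ^[n] i := congrArg Subtype.val h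
    have main : ∀ m n : ℕ, m < n → σ^[m] i = σ^[n] i → ∃ q, σ^[q + 1] i = i := by
      intro m n hlt he
      refine ⟨n - m - 1, ?_⟩
      have h1 : n - m - 1 + 1 = n - m := by omega
      rw [h1]
      have h2 : σ^[m] (σ^[n - m] i) = σ^[m] i := by
        rw [← Function.iterate_add_apply, show m + (n - m) = n by omega]
        exact he.symm
      exact Function.Injective.iterate hσinj m h2
    rcases lt_trichotomy m n with h' | h' | h'
    · exact main m n h' hval
    · exact absurd h' hmn
    · exact main n m h' hval.symm
  -- reflection property for F
  have hrefl : ∀ i (x y : X i), R (σ i) (F i x) (F i y) → R i x y := by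
    intro i x y hxy
    obtain ⟨q, hq⟩ := horb i
    set G : X i → X i :=
      fun z => cast (congrArg X hq) (compF σ F (q + 1) i z) with hGdef
    have hGbij : Function.Bijective G :=
      (cast_bij hq).comp (compF_bij σ F hFbij (q + 1) i)
    have hGhom : IsHom (R i) (R i) G := by
      intro a b h
      exact rel_transport R hq (compF_hom σ F R hFhom (q + 1) i a b h)
    have hGiso := hrev i G ⟨hGbij, hGhom⟩
    have h1 : R (σ^[q] (σ i)) (compF σ F q (σ i) (F i x)) (compF σ F q (σ i) (F i y)) :=
      compF_hom σ F R hFhom q (σ i) (F i x) (F i y) hxy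
    have h2 : R i (G x) (G y) := rel_transport R hq h1
    exact (hGiso.2 x y).mpr h2
  -- conclude
  refine ⟨hbij, ?_⟩
  rintro ⟨i, x⟩ ⟨j, y⟩
  constructor
  · exact hhom _ _
  · intro hab
    rw [hfF, hfF] at hab
    obtain ⟨e, hr⟩ := hab
    obtain rfl : i = j := hσinj e
    exact ⟨rfl, hrefl i x y hr⟩
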